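/- Let X be a real normed space, p ∈ [0,1), and q > 0 such that for all nonzero x, y ∈ X: α_p[x,y] ≤ 2^{1/q}·‖x−y‖/(‖x‖^{(1−p)q} + ‖y‖^{(1−p)q})^{1/q}. Then X is an inner product space (the norm satisfies the parallelogram law). -/

import Mathlib

open Filter Topology

section
variable {X : Type*} [NormedAddCommGroup X] [NormedSpace ℝ X]

private theorem lem1 (p q : ℝ) (hp0 : 0 ≤ p) (hq : 0 < q)
    (h : ∀ x y : X, x ≠ 0 → y ≠ 0 →
      ‖(‖x‖ ^ (p - 1)) • x - (‖y‖ ^ (p - 1)) • y‖ ≤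
        2 ^ (1 / q) * ‖x - y‖ / (‖x‖ ^ ((1 - p) * q) + ‖y‖ ^ ((1 - p) * q)) ^ (1 / q))
    (u v : X) (hu : ‖u‖ = 1) (hv : ‖v‖ = 1) (a b : ℝ) (ha : 0 < a) (hb : 0 < b) :
    (a*b) ^ ((1-p)/2) * ‖(a^p) • u + (b^p) • v‖ ≤ ‖a • u + b • v‖ := by
  have hu0 : u ≠ 0 := by intro h0; rw [h0, norm_zero] at hu; norm_num at hu
  have hv0 : v ≠ 0 := by intro h0; rw [h0, norm_zero] at hv; norm_num at hv
  have hx : a • u ≠ 0 := smul_ne_zero (ne_of_gt ha) hu0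
  have hy : (-b) • v ≠ 0 := smul_ne_zero (by linarith) hv0
  have hna : ‖a • u‖ = a := by rw [norm_smul, hu, Real.norm_eq_abs, abs_of_pos ha, mul_one]
  have hnb : ‖(-b) • v‖ = b := by
    rw [norm_smul, hv, Real.norm_eq_abs, abs_of_neg (by linarith : -b < 0), mul_one]; ring
  have key := h (a • u) ((-b) • v) hx hy
  rw [hna, hnb] at key
  have e1 : (a ^ (p-1)) • (a • u) - (b ^ (p-1)) • ((-b) • v) = (a^p) • u + (b^p) • v := by
    rw [smul_smul, smul_smul]
    have h3 : a ^ (p-1) * a = a ^ p := by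
      have h4 := Real.rpow_add ha (p-1) 1
      rw [Real.rpow_one] at h4
      rw [← h4]; norm_num
    rw [h3]
    have h5 : b ^ (p-1) * (-b) = -(b ^ p) := by
      have h4 := Real.rpow_add hb (p-1) 1
      rw [Real.rpow_one] at h4
      rw [mul_neg, ← h4]
      norm_num
    rw [h5, neg_smul, sub_neg_eq_add]
  have e2 : a • u - (-b) • v = a • u + b • v := by rw [neg_smul, sub_neg_eq_add]
  rw [e1, e2] at key
  -- key : ‖(a^p)•u + (b^p)•v‖ ≤ 2^(1/q) * ‖a•u+b•v‖ / (a^((1-p)*q)+b^((1-p)*q))^(1/q)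
  set c := (1-p)*q with hc
  set T : ℝ := 2 ^ (1/q : ℝ) with hT
  have hT0 : 0 < T := Real.rpow_pos_of_pos (by norm_num) _
  have hK0 : (0:ℝ) < (a*b) ^ ((1-p)/2) := Real.rpow_pos_of_pos (by positivity) _
  have hamgm : 2 * (a*b) ^ (c/2) ≤ a ^ c + b ^ c := by
    have h1 : (a*b) ^ (c/2) = Real.sqrt (a^c * b^c) := by
      rw [Real.sqrt_eq_rpow, ← Real.mul_rpow ha.le hb.le,
        ← Real.rpow_mul (by positivity : (0:ℝ) ≤ a*b)]
      congr 1
      ring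
    rw [h1]
    have hs : (0:ℝ) ≤ a ^ c := le_of_lt (Real.rpow_pos_of_pos ha c)
    have ht : (0:ℝ) ≤ b ^ c := le_of_lt (Real.rpow_pos_of_pos hb c)
    nlinarith [sq_nonneg (Real.sqrt (a^c) - Real.sqrt (b^c)), Real.sq_sqrt hs, Real.sq_sqrt ht,
      Real.sqrt_mul hs (b^c), Real.sqrt_nonneg (a^c), Real.sqrt_nonneg (b^c)]
  have hD : T * (a*b) ^ ((1-p)/2) ≤ (a ^ c + b ^ c) ^ (1/q : ℝ) := by
    have h2 : T * (a*b) ^ ((1-p)/2) = (2 * (a*b) ^ (c/2)) ^ (1/q : ℝ) := by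
      rw [Real.mul_rpow (by norm_num) (le_of_lt (Real.rpow_pos_of_pos (by positivity) _)),
        ← Real.rpow_mul (by positivity : (0:ℝ) ≤ a*b)]
      congr 2
      field_simp
      ring
    rw [h2]
    exact Real.rpow_le_rpow (by positivity) hamgm (by positivity)
  calc (a*b) ^ ((1-p)/2) * ‖(a^p) • u + (b^p) • v‖
      ≤ (a*b) ^ ((1-p)/2) * (T * ‖a • u + b • v‖ / (a ^ c + b ^ c) ^ (1/q : ℝ)) := by
        exact mul_le_mul_of_nonneg_left key (le_of_lt hK0)
    _ ≤ (a*b) ^ ((1-p)/2) * (T * ‖a • u + b • v‖ / (T * (a*b) ^ ((1-p)/2))) := by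
        apply mul_le_mul_of_nonneg_left _ (le_of_lt hK0)
        apply div_le_div_of_nonneg_left (by positivity) (by positivity) hD
    _ = ‖a • u + b • v‖ := by
        field_simp

private theorem rpow_tendsto (t : ℝ) (ht : 0 < t) {f : ℕ → ℝ} (hf : Tendsto f atTop (𝓝 0)) :
    Tendsto (fun n => t ^ (f n)) atTop (𝓝 1) := by
  have hc : Continuous fun s : ℝ => t ^ s := by
    have : (fun s : ℝ => t ^ s) = fun s => Real.exp (Real.log t * s) := by
      funext s; rw [Real.rpow_def_of_pos ht]
    rw [this]
    exact Real.continuous_exp.comp (continuous_const.mul continuous_id)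
  have := (hc.tendsto 0).comp hf
  simpa [Function.comp_def] using this

private theorem star' (p q : ℝ) (hp0 : 0 ≤ p) (hp1 : p < 1) (hq : 0 < q)
    (h : ∀ x y : X, x ≠ 0 → y ≠ 0 →
      ‖(‖x‖ ^ (p - 1)) • x - (‖y‖ ^ (p - 1)) • y‖ ≤
        2 ^ (1 / q) * ‖x - y‖ / (‖x‖ ^ ((1 - p) * q) + ‖y‖ ^ ((1 - p) * q)) ^ (1 / q))
    (u v : X) (hu : ‖u‖ = 1) (hv : ‖v‖ = 1) (a b : ℝ) (ha : 0 < a) (hb : 0 < b) :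
    Real.sqrt (a*b) * ‖u + v‖ ≤ ‖a • u + b • v‖ := by
  have hab : (0:ℝ) < a * b := by positivity
  have key : ∀ n : ℕ, (a*b) ^ ((1 - p^n)/2) * ‖(a^(p^n)) • u + (b^(p^n)) • v‖ ≤ ‖a • u + b • v‖ := by
    intro n
    induction n with
    | zero => simp [Real.rpow_one]
    | succ n ih =>
      refine le_trans ?_ ih
      have step := lem1 p q hp0 hq h u v hu hv (a^(p^n)) (b^(p^n))
        (Real.rpow_pos_of_pos ha _) (Real.rpow_pos_of_pos hb _)
      have e1 : (a^(p^n)) ^ p = a ^ (p^(n+1)) := by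
        rw [← Real.rpow_mul ha.le, ← pow_succ]
      have e2 : (b^(p^n)) ^ p = b ^ (p^(n+1)) := by
        rw [← Real.rpow_mul hb.le, ← pow_succ]
      have e3 : (a^(p^n)) * (b^(p^n)) = (a*b) ^ (p^n) := (Real.mul_rpow ha.le hb.le).symm
      rw [e1, e2, e3] at step
      have step2 := mul_le_mul_of_nonneg_left step
        (le_of_lt (Real.rpow_pos_of_pos hab ((1 - p^n)/2)))
      calc (a*b) ^ ((1 - p^(n+1))/2) * ‖(a^(p^(n+1))) • u + (b^(p^(n+1))) • v‖
          = (a*b) ^ ((1 - p^n)/2) * (((a*b) ^ (p^n)) ^ ((1-p)/2)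
              * ‖(a^(p^(n+1))) • u + (b^(p^(n+1))) • v‖) := by
            rw [← mul_assoc, ← Real.rpow_mul hab.le, ← Real.rpow_add hab]
            congr 2
            ring
        _ ≤ (a*b) ^ ((1 - p^n)/2) * ‖(a^(p^n)) • u + (b^(p^n)) • v‖ := step2
  have hpn : Tendsto (fun n : ℕ => p ^ n) atTop (𝓝 0) :=
    tendsto_pow_atTop_nhds_zero_of_lt_one hp0 hp1
  have lima : Tendsto (fun n : ℕ => a ^ (p ^ n)) atTop (𝓝 1) := rpow_tendsto a ha hpn
  have limb : Tendsto (fun n : ℕ => b ^ (p ^ n)) atTop (𝓝 1) := rpow_tendsto b hb hpn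
  have limn : Tendsto (fun n : ℕ => ‖(a^(p^n)) • u + (b^(p^n)) • v‖) atTop (𝓝 ‖u + v‖) := by
    have : Tendsto (fun n : ℕ => (a^(p^n)) • u + (b^(p^n)) • v) atTop (𝓝 ((1:ℝ) • u + (1:ℝ) • v)) :=
      Tendsto.add (lima.smul_const u) (limb.smul_const v)
    rw [one_smul, one_smul] at this
    exact this.norm
  have limc : Tendsto (fun n : ℕ => (a*b) ^ ((1 - p^n)/2)) atTop (𝓝 (Real.sqrt (a*b))) := by
    have hcont : Continuous fun s : ℝ => (a*b) ^ ((1 - s)/2) := by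
      have : (fun s : ℝ => (a*b) ^ ((1-s)/2)) = fun s => Real.exp (Real.log (a*b) * ((1-s)/2)) := by
        funext s; rw [Real.rpow_def_of_pos hab]
      rw [this]
      fun_prop
    have := (hcont.tendsto 0).comp hpn
    simp only [Function.comp_def] at this
    convert this using 2
    rw [Real.sqrt_eq_rpow]
    norm_num
  exact le_of_tendsto (limc.mul limn) (Filter.Eventually.of_forall key)

private theorem arith1 (s f m : ℝ) (hs : 0 < s)
    (h : (m + s*f) * (s*m + f) ≤ (1+s)^2 * (f*m)) : f = m := by
  have h1 : s * (f-m)^2 ≤ 0 := by nlinarith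
  have h2 : (f-m)^2 = 0 := le_antisymm (by nlinarith [sq_nonneg (f-m)]) (sq_nonneg _)
  have h3 := sq_eq_zero_iff.mp h2
  linarith

private theorem ficken1
    (hstar : ∀ u v : X, ‖u‖ = 1 → ‖v‖ = 1 → ∀ a b : ℝ, 0 < a → 0 < b →
      Real.sqrt (a*b) * ‖u + v‖ ≤ ‖a • u + b • v‖)
    (u v : X) (hu : ‖u‖ = 1) (hv : ‖v‖ = 1) (s : ℝ) (hs : 0 < s) :
    ‖u + s • v‖ = ‖s • u + v‖ := by
  by_cases hvu : v = -u
  · have e1 : u + s • v = (1-s) • u := by rw [hvu]; module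
    have e2 : s • u + v = -((1-s) • u) := by rw [hvu]; module
    rw [e1, e2, norm_neg]
  · have hA : 0 < ‖u + v‖ := by
      rw [norm_pos_iff]
      intro h0
      exact hvu (by linear_combination (norm := module) h0)
    have hf : 0 < ‖u + s • v‖ := by
      rw [norm_pos_iff]
      intro h0
      have hn : ‖u‖ = ‖s • v‖ := by
        have : u = -(s • v) := by linear_combination (norm := module) h0
        rw [this, norm_neg]
      rw [hu, norm_smul, hv, Real.norm_eq_abs, abs_of_pos hs, mul_one] at hn
      apply hvu
      have : u + (1:ℝ) • v = 0 := by rw [one_smul]; rw [← hn] at h0; simpa using h0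
      linear_combination (norm := module) this
    have hm : 0 < ‖s • u + v‖ := by
      rw [norm_pos_iff]
      intro h0
      have hn : ‖s • u‖ = ‖v‖ := by
        have : v = -(s • u) := by linear_combination (norm := module) h0
        rw [this, norm_neg]
      rw [norm_smul, hu, hv, Real.norm_eq_abs, abs_of_pos hs, mul_one] at hn
      apply hvu
      rw [hn] at h0
      have : (1:ℝ) • u + v = 0 := by simpa using h0
      linear_combination (norm := module) this
    set f := ‖u + s • v‖ with hfdef
    set m := ‖s • u + v‖ with hmdef
    have hxu : ‖f⁻¹ • (u + s • v)‖ = 1 := by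
      rw [norm_smul, Real.norm_eq_abs, abs_of_pos (inv_pos.mpr hf), ← hfdef, inv_mul_cancel₀ hf.ne']
    have hyu : ‖m⁻¹ • (s • u + v)‖ = 1 := by
      rw [norm_smul, Real.norm_eq_abs, abs_of_pos (inv_pos.mpr hm), ← hmdef, inv_mul_cancel₀ hm.ne']
    have ineq1 := hstar _ _ hxu hyu f m hf hm
    have e3 : f • (f⁻¹ • (u + s • v)) + m • (m⁻¹ • (s • u + v)) = (1+s) • (u + v) := by
      rw [smul_inv_smul₀ hf.ne', smul_inv_smul₀ hm.ne']
      module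
    rw [e3] at ineq1
    have e4 : ‖(1+s) • (u+v)‖ = (1+s) * ‖u+v‖ := by
      rw [norm_smul, Real.norm_eq_abs, abs_of_pos (by linarith)]
    rw [e4] at ineq1
    have ha1 : 0 < f⁻¹ + s * m⁻¹ := by positivity
    have hb1 : 0 < s * f⁻¹ + m⁻¹ := by positivity
    have ineq2 := hstar u v hu hv _ _ ha1 hb1
    have e5 : (f⁻¹ + s * m⁻¹) • u + (s * f⁻¹ + m⁻¹) • v
        = f⁻¹ • (u + s • v) + m⁻¹ • (s • u + v) := by module
    rw [e5] at ineq2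
    -- chain
    have chain : Real.sqrt (f*m) * (Real.sqrt ((f⁻¹ + s * m⁻¹) * (s * f⁻¹ + m⁻¹)) * ‖u+v‖)
        ≤ (1+s) * ‖u+v‖ := by
      refine le_trans ?_ ineq1
      exact mul_le_mul_of_nonneg_left ineq2 (Real.sqrt_nonneg _)
    have hPn : (0:ℝ) ≤ (f⁻¹ + s * m⁻¹) * (s * f⁻¹ + m⁻¹) := by positivity
    have key : Real.sqrt (f * m * ((f⁻¹ + s * m⁻¹) * (s * f⁻¹ + m⁻¹))) ≤ 1 + s := by
      have e6 : Real.sqrt (f*m) * Real.sqrt ((f⁻¹ + s * m⁻¹) * (s * f⁻¹ + m⁻¹))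
          = Real.sqrt (f * m * ((f⁻¹ + s * m⁻¹) * (s * f⁻¹ + m⁻¹))) := by
        rw [← Real.sqrt_mul (by positivity)]
      have := (mul_le_mul_iff_of_pos_right hA).mp (by linarith [chain] : Real.sqrt (f*m)
        * Real.sqrt ((f⁻¹ + s * m⁻¹) * (s * f⁻¹ + m⁻¹)) * ‖u+v‖ ≤ (1+s) * ‖u+v‖)
      rwa [e6] at this
    have key2 : f * m * ((f⁻¹ + s * m⁻¹) * (s * f⁻¹ + m⁻¹)) ≤ (1+s)^2 := by
      nlinarith [Real.sq_sqrt (by positivity : (0:ℝ) ≤ f * m * ((f⁻¹ + s * m⁻¹) * (s * f⁻¹ + m⁻¹))),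
        Real.sqrt_nonneg (f * m * ((f⁻¹ + s * m⁻¹) * (s * f⁻¹ + m⁻¹)))]
    have expand : f * m * ((f⁻¹ + s * m⁻¹) * (s * f⁻¹ + m⁻¹))
        = (m + s*f) * (s*m + f) / (f*m) := by
      field_simp
    rw [expand] at key2
    have key3 : (m + s*f) * (s*m + f) ≤ (1+s)^2 * (f*m) := by
      rw [div_le_iff₀ (by positivity)] at key2
      linarith
    exact arith1 s f m hs key3

private theorem ficken (hstar : ∀ u v : X, ‖u‖ = 1 → ‖v‖ = 1 → ∀ a b : ℝ, 0 < a → 0 < b →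
      Real.sqrt (a*b) * ‖u + v‖ ≤ ‖a • u + b • v‖)
    (u v : X) (hu : ‖u‖ = 1) (hv : ‖v‖ = 1) (α β : ℝ) :
    ‖α • u + β • v‖ = ‖β • u + α • v‖ := by
  have hv' : ‖-v‖ = 1 := by rw [norm_neg]; exact hv
  have helper : ∀ t : ℝ, ‖u + t • v‖ = ‖t • u + v‖ := by
    intro t
    rcases lt_trichotomy t 0 with ht | ht | ht
    · have h1 := ficken1 hstar u (-v) hu hv' (-t) (by linarith)
      have e1 : u + (-t) • (-v) = u + t • v := by module
      have e2 : (-t) • u + (-v) = -(t • u + v) := by module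
      rw [e1, e2, norm_neg] at h1
      exact h1
    · subst ht
      simp [hu, hv]
    · exact ficken1 hstar u v hu hv t ht
  by_cases hα : α = 0
  · subst hα
    simp only [zero_smul, zero_add, add_zero]
    rw [norm_smul, norm_smul, hu, hv]
  · have h1 := helper (β / α)
    have e1 : α • (u + (β/α) • v) = α • u + β • v := by
      rw [smul_add, smul_smul, mul_div_cancel₀ _ hα]
    have e2 : α • ((β/α) • u + v) = β • u + α • v := by
      rw [smul_add, smul_smul, mul_div_cancel₀ _ hα]
    calc ‖α • u + β • v‖ = ‖α • (u + (β/α) • v)‖ := by rw [e1]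
      _ = |α| * ‖u + (β/α) • v‖ := by rw [norm_smul, Real.norm_eq_abs]
      _ = |α| * ‖(β/α) • u + v‖ := by rw [h1]
      _ = ‖α • ((β/α) • u + v)‖ := by rw [norm_smul, Real.norm_eq_abs]
      _ = ‖β • u + α • v‖ := by rw [e2]

private theorem even1 (d1 d2 : X)
    (heven : ∀ a b : ℝ, ‖a • d1 + b • d2‖ = ‖a • d1 + (-b) • d2‖)
    (a b : ℝ) : ‖a • d1 + b • d2‖ = ‖(-a) • d1 + b • d2‖ := by
  have e : (-a) • d1 + b • d2 = -(a • d1 + (-b) • d2) := by module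
  rw [e, norm_neg, ← heven]

private theorem starF
    (hfk : ∀ u v : X, ‖u‖ = 1 → ‖v‖ = 1 → ∀ α β : ℝ, ‖α • u + β • v‖ = ‖β • u + α • v‖)
    (d1 d2 : X) (h1 : ‖d1‖ = 1)
    (σ ρ t : ℝ) (hP : ‖σ • d1 + ρ • d2‖ = 1) :
    ‖(1 + t*σ) • d1 + (t*ρ) • d2‖ = ‖(t + σ) • d1 + ρ • d2‖ := by
  have key := hfk d1 (σ • d1 + ρ • d2) h1 hP 1 t
  have e1 : (1:ℝ) • d1 + t • (σ • d1 + ρ • d2) = (1 + t*σ) • d1 + (t*ρ) • d2 := by module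
  have e2 : t • d1 + (1:ℝ) • (σ • d1 + ρ • d2) = (t + σ) • d1 + ρ • d2 := by module
  rw [e1, e2] at key
  exact key

private theorem doubleF
    (hfk : ∀ u v : X, ‖u‖ = 1 → ‖v‖ = 1 → ∀ α β : ℝ, ‖α • u + β • v‖ = ‖β • u + α • v‖)
    (d1 d2 : X) (h1 : ‖d1‖ = 1)
    (heven : ∀ a b : ℝ, ‖a • d1 + b • d2‖ = ‖a • d1 + (-b) • d2‖)
    (σ ρ : ℝ) (hP : ‖σ • d1 + ρ • d2‖ = 1) :
    ‖(1 - 2*σ^2) • d1 + (2*σ*ρ) • d2‖ = 1 := by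
  have key := starF hfk d1 d2 h1 σ ρ (-2*σ) hP
  have e1 : (1 + (-2*σ)*σ) = 1 - 2*σ^2 := by ring
  have e2 : ((-2*σ)*ρ) = -(2*σ*ρ) := by ring
  have e3 : ((-2*σ) + σ) = -σ := by ring
  rw [e1, e2, e3] at key
  calc ‖(1 - 2*σ^2) • d1 + (2*σ*ρ) • d2‖
      = ‖(1 - 2*σ^2) • d1 + (-(2*σ*ρ)) • d2‖ := heven _ _
    _ = ‖(-σ) • d1 + ρ • d2‖ := key
    _ = ‖σ • d1 + ρ • d2‖ := (even1 d1 d2 heven σ ρ).symm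
    _ = 1 := hP

private theorem flat_kill
    (hfk : ∀ u v : X, ‖u‖ = 1 → ‖v‖ = 1 → ∀ α β : ℝ, ‖α • u + β • v‖ = ‖β • u + α • v‖)
    (U V : X) (hU : ‖U‖ = 1) (hV : ‖V‖ = 1)
    (hsum : ‖U + V‖ = 2) : U = V := by
  by_contra hne
  have hUV : U ≠ -V := by
    intro h0
    rw [h0] at hsum
    simp at hsum
  have hB : 0 < ‖U - V‖ := by
    rw [norm_pos_iff]
    intro h0
    exact hne (by linear_combination (norm := module) h0)
  set B := ‖U - V‖ with hBdef
  set d1 : X := (2⁻¹ : ℝ) • (U + V) with hd1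
  set d2 : X := B⁻¹ • (U - V) with hd2
  have h1 : ‖d1‖ = 1 := by
    rw [hd1, norm_smul, hsum, Real.norm_eq_abs]
    rw [abs_of_pos (by norm_num : (0:ℝ) < 2⁻¹)]
    norm_num
  have h2 : ‖d2‖ = 1 := by
    rw [hd2, norm_smul, Real.norm_eq_abs, abs_of_pos (inv_pos.mpr hB), ← hBdef,
      inv_mul_cancel₀ hB.ne']
  have hcoord : ∀ a b : ℝ, a • d1 + b • d2 = (a/2 + b/B) • U + (a/2 - b/B) • V := by
    intro a b
    rw [hd1, hd2, smul_smul, smul_smul]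
    have e1 : a * 2⁻¹ = a/2 := by ring
    have e2 : b * B⁻¹ = b/B := by ring
    rw [e1, e2]
    module
  have heven : ∀ a b : ℝ, ‖a • d1 + b • d2‖ = ‖a • d1 + (-b) • d2‖ := by
    intro a b
    rw [hcoord a b, hcoord a (-b)]
    have e1 : -b/B = -(b/B) := by ring
    rw [e1]
    have := hfk U V hU hV (a/2 + b/B) (a/2 - b/B)
    rw [this]
    congr 2 <;> ring
  have hbase : d1 + (B/2) • d2 = U := by
    rw [hd1, hd2, smul_smul]
    have e1 : B/2 * B⁻¹ = 2⁻¹ := by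
      field_simp
    rw [e1]
    module
  have hstep : ∀ c : ℝ, ‖d1 + c • d2‖ = 1 → ‖d1 + (2*c) • d2‖ = 1 := by
    intro c hc
    have hc' : ‖(1:ℝ) • d1 + c • d2‖ = 1 := by rw [one_smul]; exact hc
    have key := starF hfk d1 d2 h1 1 c (-2) hc'
    have e1 : (1 + (-2)*1 : ℝ) = -1 := by norm_num
    have e2 : ((-2)*c : ℝ) = -(2*c) := by ring
    have e3 : ((-2) + 1 : ℝ) = -1 := by norm_num
    rw [e1, e2, e3] at key
    have lhs : ‖d1 + (2*c) • d2‖ = ‖(-1 : ℝ) • d1 + (-(2*c)) • d2‖ := by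
      rw [← even1 d1 d2 heven 1 (-(2*c)), heven, one_smul]
      norm_num
    have rhs : ‖(-1 : ℝ) • d1 + c • d2‖ = 1 := by
      rw [← even1 d1 d2 heven 1 c, one_smul]
      exact hc
    rw [lhs, key, rhs]
  have hind : ∀ k : ℕ, ‖d1 + ((2:ℝ)^k * (B/2)) • d2‖ = 1 := by
    intro k
    induction k with
    | zero => rw [pow_zero, one_mul, hbase]; exact hU
    | succ k ih =>
      have := hstep _ ih
      have e : (2:ℝ) * ((2:ℝ)^k * (B/2)) = (2:ℝ)^(k+1) * (B/2) := by ring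
      rw [e] at this
      exact this
  obtain ⟨k, hk⟩ := pow_unbounded_of_one_lt (2 / (B/2) : ℝ) (by norm_num : (1:ℝ) < 2)
  have hck : (2:ℝ) < (2:ℝ)^k * (B/2) := by
    rw [div_lt_iff₀ (by positivity : (0:ℝ) < B/2)] at hk
    linarith
  have hle : (2:ℝ)^k * (B/2) ≤ 2 := by
    have hnorm := hind k
    have this0 : ‖(d1 + ((2:ℝ)^k * (B/2)) • d2) - d1‖ ≤ ‖d1 + ((2:ℝ)^k * (B/2)) • d2‖ + ‖d1‖ :=
      norm_sub_le _ _
    have e : (d1 + ((2:ℝ)^k * (B/2)) • d2) - d1 = ((2:ℝ)^k * (B/2)) • d2 := by module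
    rw [e] at this0
    have := this0
    rw [hnorm, h1, norm_smul, h2, Real.norm_eq_abs, mul_one,
      abs_of_pos (by positivity : (0:ℝ) < (2:ℝ)^k * (B/2))] at this
    linarith
  linarith

private theorem seg
    (hfk : ∀ u v : X, ‖u‖ = 1 → ‖v‖ = 1 → ∀ α β : ℝ, ‖α • u + β • v‖ = ‖β • u + α • v‖)
    (W1 W2 : X) (hW1 : ‖W1‖ = 1) (hW2 : ‖W2‖ = 1)
    (θ : ℝ) (hθ0 : 0 < θ) (hθ1 : θ < 1) (hP : ‖(1-θ) • W1 + θ • W2‖ = 1) : W1 = W2 := by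
  apply flat_kill hfk W1 W2 hW1 hW2
  have hup : ‖W1 + W2‖ ≤ 2 := by
    calc ‖W1 + W2‖ ≤ ‖W1‖ + ‖W2‖ := norm_add_le _ _
      _ = 2 := by rw [hW1, hW2]; norm_num
  have hlow : 2 ≤ ‖W1 + W2‖ := by
    rcases le_or_gt θ 2⁻¹ with hc | hc
    · have e : (1-θ) • W1 + θ • W2 = (1-2*θ) • W1 + (2*θ) • ((2⁻¹ : ℝ) • (W1 + W2)) := by
        module
      have hin : (1:ℝ) ≤ (1-2*θ) + (2*θ) * ‖(2⁻¹ : ℝ) • (W1 + W2)‖ := by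
        calc (1:ℝ) = ‖(1-θ) • W1 + θ • W2‖ := hP.symm
          _ ≤ ‖(1-2*θ) • W1‖ + ‖(2*θ) • ((2⁻¹ : ℝ) • (W1 + W2))‖ := by
              rw [e]; exact norm_add_le _ _
          _ = (1-2*θ) + (2*θ) * ‖(2⁻¹ : ℝ) • (W1 + W2)‖ := by
              have t1 : ‖(1-2*θ) • W1‖ = 1-2*θ := by
                rw [norm_smul, hW1, Real.norm_eq_abs,
                  abs_of_nonneg (by linarith : (0:ℝ) ≤ 1-2*θ), mul_one]
              have t2 : ‖(2*θ) • ((2⁻¹:ℝ) • (W1+W2))‖ = (2*θ) * ‖(2⁻¹:ℝ) • (W1+W2)‖ := by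
                rw [norm_smul, Real.norm_eq_abs, abs_of_pos (by linarith : (0:ℝ) < 2*θ)]
              rw [t1, t2]
      have hM : (1:ℝ) ≤ ‖(2⁻¹ : ℝ) • (W1 + W2)‖ := by nlinarith
      rw [norm_smul, Real.norm_eq_abs] at hM
      rw [show |(2⁻¹ : ℝ)| = 2⁻¹ by norm_num] at hM
      linarith
    · have e : (1-θ) • W1 + θ • W2 = (2-2*θ) • ((2⁻¹ : ℝ) • (W1 + W2)) + (2*θ-1) • W2 := by
        module
      have hin : (1:ℝ) ≤ (2-2*θ) * ‖(2⁻¹ : ℝ) • (W1 + W2)‖ + (2*θ-1) := by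
        calc (1:ℝ) = ‖(1-θ) • W1 + θ • W2‖ := hP.symm
          _ ≤ ‖(2-2*θ) • ((2⁻¹ : ℝ) • (W1 + W2))‖ + ‖(2*θ-1) • W2‖ := by
              rw [e]; exact norm_add_le _ _
          _ = (2-2*θ) * ‖(2⁻¹ : ℝ) • (W1 + W2)‖ + (2*θ-1) := by
              have t1 : ‖(2-2*θ) • ((2⁻¹:ℝ) • (W1+W2))‖ = (2-2*θ) * ‖(2⁻¹:ℝ) • (W1+W2)‖ := by
                rw [norm_smul, Real.norm_eq_abs, abs_of_pos (by linarith : (0:ℝ) < 2-2*θ)]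
              have t2 : ‖(2*θ-1) • W2‖ = 2*θ-1 := by
                rw [norm_smul, hW2, Real.norm_eq_abs, abs_of_pos (by linarith : (0:ℝ) < 2*θ-1),
                  mul_one]
              rw [t1, t2]
      have hM : (1:ℝ) ≤ ‖(2⁻¹ : ℝ) • (W1 + W2)‖ := by nlinarith
      rw [norm_smul, Real.norm_eq_abs] at hM
      rw [show |(2⁻¹ : ℝ)| = 2⁻¹ by norm_num] at hM
      linarith
  linarith

private theorem halfF
    (hfk : ∀ u v : X, ‖u‖ = 1 → ‖v‖ = 1 → ∀ α β : ℝ, ‖α • u + β • v‖ = ‖β • u + α • v‖)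
    (d1 d2 : X) (h1 : ‖d1‖ = 1)
    (heven : ∀ a b : ℝ, ‖a • d1 + b • d2‖ = ‖a • d1 + (-b) • d2‖)
    (hindep : ∀ a b : ℝ, a • d1 + b • d2 = 0 → a = 0 ∧ b = 0)
    (α : ℝ) (hα0 : 0 < α) (hα1 : α < Real.pi)
    (hq : ‖(Real.cos α) • d1 + (Real.sin α) • d2‖ = 1) :
    ‖(Real.sin (α/2)) • d1 + (Real.cos (α/2)) • d2‖ = 1 := by
  set σ := Real.sin (α/2) with hσ
  set ρ := Real.cos (α/2) with hρ
  have hσ0 : 0 < σ := Real.sin_pos_of_pos_of_lt_pi (by linarith) (by linarith [Real.pi_pos])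
  have hρ0 : 0 < ρ := Real.cos_pos_of_mem_Ioo
    ⟨by linarith [Real.pi_pos], by linarith⟩
  have hsin : Real.sin α = 2*σ*ρ := by
    rw [hσ, hρ, show α = 2*(α/2) by ring, Real.sin_two_mul]
    ring
  have hcos : Real.cos α = 1 - 2*σ^2 := by
    rw [hσ, show α = 2*(α/2) by ring, Real.cos_two_mul, Real.cos_sq']
    ring
  have hsinα : 0 < Real.sin α := Real.sin_pos_of_pos_of_lt_pi hα0 hα1
  set m := ‖σ • d1 + ρ • d2‖ with hm
  have hm0 : 0 < m := by
    rw [hm, norm_pos_iff]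
    intro h0
    exact hσ0.ne' (hindep _ _ h0).1
  -- goal : m = 1 (as norm)
  show m = 1
  have hunit : ‖(σ/m) • d1 + (ρ/m) • d2‖ = 1 := by
    have e : (σ/m) • d1 + (ρ/m) • d2 = m⁻¹ • (σ • d1 + ρ • d2) := by
      rw [smul_add, smul_smul, smul_smul]
      congr 2 <;> ring
    rw [e, norm_smul, Real.norm_eq_abs, abs_of_pos (inv_pos.mpr hm0), ← hm,
      inv_mul_cancel₀ hm0.ne']
  have hD := doubleF hfk d1 d2 h1 heven (σ/m) (ρ/m) hunit
  rcases lt_trichotomy m 1 with hlt | heq | hgt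
  · -- m < 1 : contradiction
    exfalso
    have hθ0 : 0 < m^2 := by positivity
    have hθ1 : m^2 < 1 := by nlinarith
    have e : (1 - m^2) • d1 + (m^2) • ((1 - 2*(σ/m)^2) • d1 + (2*(σ/m)*(ρ/m)) • d2)
        = (Real.cos α) • d1 + (Real.sin α) • d2 := by
      rw [hsin, hcos]
      have e1 : (1-m^2) + m^2*(1 - 2*(σ/m)^2) = 1 - 2*σ^2 := by
        field_simp
        try ring
      have e2 : m^2*(2*(σ/m)*(ρ/m)) = 2*σ*ρ := by
        field_simp
        try ring
      rw [smul_add, smul_smul, smul_smul, ← add_assoc, ← add_smul, e1, e2]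
    have hseg := seg hfk d1 _ h1 hD (m^2) hθ0 hθ1 (by rw [e]; exact hq)
    -- d1 = Z : coefficients force sin α / stuff = 0
    have e0 : (1 - 2*(σ/m)^2 - 1) • d1 + (2*(σ/m)*(ρ/m)) • d2 = 0 := by
      rw [show (1 - 2*(σ/m)^2 - 1) • d1 + (2*(σ/m)*(ρ/m)) • d2
          = ((1 - 2*(σ/m)^2) • d1 + (2*(σ/m)*(ρ/m)) • d2) - d1 by module, ← hseg, sub_self]
    have hz := (hindep _ _ e0).2
    have hpos : 0 < 2*(σ/m)*(ρ/m) := by positivity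
    linarith
  · exact heq
  · -- m > 1
    exfalso
    have hθ0 : 0 < (m^2)⁻¹ := by positivity
    have hθ1 : (m^2)⁻¹ < 1 := by
      rw [inv_lt_one_iff₀]
      right
      nlinarith
    have e : (1 - (m^2)⁻¹) • d1 + ((m^2)⁻¹) • ((Real.cos α) • d1 + (Real.sin α) • d2)
        = (1 - 2*(σ/m)^2) • d1 + (2*(σ/m)*(ρ/m)) • d2 := by
      rw [hsin, hcos]
      have e1 : (1-(m^2)⁻¹) + (m^2)⁻¹*(1 - 2*σ^2) = 1 - 2*(σ/m)^2 := by
        field_simp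
        try ring
      have e2 : (m^2)⁻¹*(2*σ*ρ) = 2*(σ/m)*(ρ/m) := by
        field_simp
        try ring
      rw [smul_add, smul_smul, smul_smul, ← add_assoc, ← add_smul, e1, e2]
    have hseg := seg hfk d1 _ h1 hq ((m^2)⁻¹) hθ0 hθ1 (by rw [e]; exact hD)
    have e0 : (Real.cos α - 1) • d1 + (Real.sin α) • d2 = 0 := by
      rw [show (Real.cos α - 1) • d1 + (Real.sin α) • d2
          = ((Real.cos α) • d1 + (Real.sin α) • d2) - d1 by module, ← hseg, sub_self]
    exact hsinα.ne' (hindep _ _ e0).2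

private theorem circleF
    (hfk : ∀ u v : X, ‖u‖ = 1 → ‖v‖ = 1 → ∀ α β : ℝ, ‖α • u + β • v‖ = ‖β • u + α • v‖)
    (d1 d2 : X) (h1 : ‖d1‖ = 1) (h2 : ‖d2‖ = 1)
    (heven : ∀ a b : ℝ, ‖a • d1 + b • d2‖ = ‖a • d1 + (-b) • d2‖)
    (hindep : ∀ a b : ℝ, a • d1 + b • d2 = 0 → a = 0 ∧ b = 0) :
    ∀ α : ℝ, ‖(Real.cos α) • d1 + (Real.sin α) • d2‖ = 1 := by
  set S : Set ℝ := {α | ‖(Real.cos α) • d1 + (Real.sin α) • d2‖ = 1} with hS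
  have mem0 : (0:ℝ) ∈ S := by
    show ‖(Real.cos 0) • d1 + (Real.sin 0) • d2‖ = 1
    rw [Real.cos_zero, Real.sin_zero, one_smul, zero_smul, add_zero, h1]
  have mempi2 : (Real.pi/2) ∈ S := by
    show ‖(Real.cos (Real.pi/2)) • d1 + (Real.sin (Real.pi/2)) • d2‖ = 1
    rw [Real.cos_pi_div_two, Real.sin_pi_div_two, one_smul, zero_smul, zero_add, h2]
  have hneg : ∀ α, α ∈ S → -α ∈ S := by
    intro α hα
    show ‖(Real.cos (-α)) • d1 + (Real.sin (-α)) • d2‖ = 1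
    rw [Real.cos_neg, Real.sin_neg, ← heven]
    exact hα
  have hrefl : ∀ α, α ∈ S → Real.pi - α ∈ S := by
    intro α hα
    show ‖(Real.cos (Real.pi - α)) • d1 + (Real.sin (Real.pi - α)) • d2‖ = 1
    rw [Real.cos_pi_sub, Real.sin_pi_sub, ← even1 d1 d2 heven]
    exact hα
  have hhalf : ∀ α, 0 < α → α < Real.pi → α ∈ S → (Real.pi/2 - α/2) ∈ S := by
    intro α ha0 ha1 hα
    have := halfF hfk d1 d2 h1 heven hindep α ha0 ha1 hα
    show ‖(Real.cos (Real.pi/2 - α/2)) • d1 + (Real.sin (Real.pi/2 - α/2)) • d2‖ = 1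
    rw [Real.cos_pi_div_two_sub, Real.sin_pi_div_two_sub]
    exact this
  have mempi : Real.pi ∈ S := by
    have := hrefl 0 mem0
    simpa using this
  -- dyadic points
  have key : ∀ k : ℕ, ∀ m : ℕ, m ≤ 2^k → ((m:ℝ) * Real.pi / 2^k) ∈ S := by
    intro k
    induction k with
    | zero =>
      intro m hm
      interval_cases m
      · simpa using mem0
      · simpa using mempi
    | succ k ih =>
      have hsmall : ∀ m : ℕ, 0 < m → m < 2^k → ((m:ℝ) * Real.pi / 2^(k+1)) ∈ S := by
        intro m hm0 hmk
        have hmk' : (2^k - m) ≤ 2^k := Nat.sub_le _ _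
        have hmem := ih (2^k - m) hmk'
        have hcast : ((2^k - m : ℕ) : ℝ) = 2^k - (m:ℝ) := by
          push_cast [Nat.cast_sub (le_of_lt hmk)]
          ring
        rw [hcast] at hmem
        have hα0 : 0 < (2^k - (m:ℝ)) * Real.pi / 2^k := by
          have hmr : (m:ℝ) < 2^k := by exact_mod_cast hmk
          have h2k : (0:ℝ) < 2^k := by positivity
          have hnum : (0:ℝ) < 2^k - (m:ℝ) := by linarith
          exact div_pos (mul_pos hnum Real.pi_pos) h2k
        have hα1 : (2^k - (m:ℝ)) * Real.pi / 2^k < Real.pi := by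
          have hm0' : (0:ℝ) < m := by exact_mod_cast hm0
          have h2k : (0:ℝ) < 2^k := by positivity
          rw [div_lt_iff₀ h2k]
          have := Real.pi_pos
          nlinarith
        have := hhalf _ hα0 hα1 hmem
        have earith : Real.pi/2 - ((2^k - (m:ℝ)) * Real.pi / 2^k)/2 = (m:ℝ) * Real.pi / 2^(k+1) := by
          have h2k : (2:ℝ)^k ≠ 0 := by positivity
          field_simp
          ring
        rwa [earith] at this
      intro m hm
      rcases Nat.eq_zero_or_pos m with rfl | hm0
      · simpa using mem0
      rcases lt_trichotomy m (2^k) with hlt | heq | hgt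
      · exact hsmall m hm0 hlt
      · subst heq
        have earith : ((2^k : ℕ):ℝ) * Real.pi / 2^(k+1) = Real.pi/2 := by
          have h2k : (2:ℝ)^k ≠ 0 := by positivity
          push_cast
          field_simp
          ring
        rw [earith]
        exact mempi2
      · rcases eq_or_lt_of_le hm with heq2 | hlt2
        · rw [heq2]
          have earith : ((2^(k+1) : ℕ):ℝ) * Real.pi / 2^(k+1) = Real.pi := by
            have h2k : (2:ℝ)^(k+1) ≠ 0 := by positivity
            push_cast
            field_simp
          rw [earith]
          exact mempi
        · -- 2^k < m < 2^(k+1)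
          set m' := 2^(k+1) - m with hm'
          have hm'0 : 0 < m' := Nat.sub_pos_of_lt hlt2
          have hpow : (2:ℕ)^(k+1) = 2^k + 2^k := by ring
          have hm'k : m' < 2^k := by
            rw [hm', hpow]
            omega
          have hmem := hsmall m' hm'0 hm'k
          have hcast : ((m' : ℕ) : ℝ) = 2^(k+1) - (m:ℝ) := by
            rw [hm']
            push_cast [Nat.cast_sub (le_of_lt hlt2)]
            ring
          rw [hcast] at hmem
          have := hrefl _ hmem
          have earith : Real.pi - (2^(k+1) - (m:ℝ)) * Real.pi / 2^(k+1) = (m:ℝ) * Real.pi / 2^(k+1) := by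
            have h2k : (2:ℝ)^(k+1) ≠ 0 := by positivity
            field_simp
            ring
          rwa [earith] at this
  -- shifts by integer multiples of pi
  have hshift : ∀ α, α ∈ S → α + Real.pi ∈ S := by
    intro α hα
    have := hrefl _ (hneg _ hα)
    rwa [sub_neg_eq_add, add_comm] at this
  have hshift' : ∀ α, α ∈ S → α - Real.pi ∈ S := by
    intro α hα
    have := hneg _ (hrefl _ hα)
    rwa [neg_sub] at this
  have hshiftz : ∀ (z : ℤ) (α : ℝ), α ∈ S → α + (z:ℝ) * Real.pi ∈ S := by
    intro z
    induction z using Int.induction_on with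
    | zero => intro α hα; simpa using hα
    | succ n ihn =>
      intro α hα
      have hstep2 := hshift _ (ihn α hα)
      have e : α + (((n:ℤ):ℝ)) * Real.pi + Real.pi = α + (((n:ℤ)+1 : ℤ):ℝ) * Real.pi := by
        push_cast; ring
      rw [e] at hstep2
      exact hstep2
    | pred n ihn =>
      intro α hα
      have hstep2 := hshift' _ (ihn α hα)
      have e : α + ((-(n:ℤ) : ℤ):ℝ) * Real.pi - Real.pi = α + ((-(n:ℤ)-1 : ℤ):ℝ) * Real.pi := by
        push_cast; ring
      rw [e] at hstep2
      exact hstep2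
  have keyz : ∀ (z : ℤ) (k : ℕ), ((z:ℝ) * Real.pi / 2^k) ∈ S := by
    intro z k
    have hdiv : z = 2^k * (z / 2^k) + z % 2^k := (Int.mul_ediv_add_emod z (2^k)).symm
    set q := z / 2^k with hq
    set r := z % 2^k with hr
    have hr0 : 0 ≤ r := Int.emod_nonneg z (by positivity)
    have hrlt : r < 2^k := Int.emod_lt_of_pos z (by positivity)
    have hrnat : ∃ n : ℕ, (n:ℤ) = r ∧ n ≤ 2^k := by
      refine ⟨r.toNat, Int.toNat_of_nonneg hr0, ?_⟩
      have h2c : ((2:ℤ)^k) = ((2^k : ℕ) : ℤ) := by push_cast; ring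
      omega
    obtain ⟨n, hn, hnle⟩ := hrnat
    have hmem := key k n hnle
    have hstep := hshiftz q _ hmem
    have hzeq : z = 2^k * q + (n:ℤ) := by rw [hn]; exact hdiv
    have hzr : (z:ℝ) = 2^k * (q:ℝ) + (n:ℝ) := by
      have hcg := congrArg (fun t : ℤ => (t:ℝ)) hzeq
      push_cast at hcg
      exact hcg
    have earith : (n:ℝ) * Real.pi / 2^k + (q:ℝ) * Real.pi = (z:ℝ) * Real.pi / 2^k := by
      have h2k : (2:ℝ)^k ≠ 0 := by positivity
      rw [hzr]
      field_simp
      ring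
    rwa [earith] at hstep
  -- density + closedness
  intro α
  have hclosed : IsClosed S := by
    have hcont : Continuous fun β : ℝ => ‖(Real.cos β) • d1 + (Real.sin β) • d2‖ :=
      ((Real.continuous_cos.smul continuous_const).add
        (Real.continuous_sin.smul continuous_const)).norm
    exact isClosed_eq hcont continuous_const
  set T : Set ℝ := {β | ∃ (z : ℤ) (k : ℕ), β = (z:ℝ) * Real.pi / 2^k} with hT
  have hTS : T ⊆ S := by
    rintro β ⟨z, k, rfl⟩
    exact keyz z k
  have hdense : α ∈ closure T := by
    rw [Metric.mem_closure_iff]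
    intro ε hε
    obtain ⟨k, hk⟩ := pow_unbounded_of_one_lt (Real.pi / ε) (by norm_num : (1:ℝ) < 2)
    set z : ℤ := ⌊α * 2^k / Real.pi⌋ with hz
    refine ⟨(z:ℝ) * Real.pi / 2^k, ⟨z, k, rfl⟩, ?_⟩
    have h2k : (0:ℝ) < 2^k := by positivity
    have hπ := Real.pi_pos
    have hc : (0:ℝ) < Real.pi / 2^k := div_pos hπ h2k
    have hfl1 : (z:ℝ) ≤ α * 2^k / Real.pi := Int.floor_le _
    have hfl2 : α * 2^k / Real.pi < z + 1 := Int.lt_floor_add_one _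
    have efix : (α * 2^k / Real.pi) * (Real.pi / 2^k) = α := by
      field_simp
    have hl : (z:ℝ) * (Real.pi/2^k) ≤ α := by
      have hmul := mul_le_mul_of_nonneg_right hfl1 hc.le
      rwa [efix] at hmul
    have hu : α < ((z:ℝ)+1) * (Real.pi/2^k) := by
      have hmul := mul_lt_mul_of_pos_right hfl2 hc
      rwa [efix] at hmul
    have hπk : Real.pi / 2^k < ε := by
      rw [div_lt_iff₀ h2k]
      rw [div_lt_iff₀ hε] at hk
      linarith
    rw [Real.dist_eq, abs_lt]
    have e1 : (z:ℝ) * (Real.pi/2^k) = (z:ℝ)*Real.pi/2^k := by ring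
    have e2 : ((z:ℝ)+1) * (Real.pi/2^k) = (z:ℝ)*Real.pi/2^k + Real.pi/2^k := by ring
    rw [e1] at hl
    rw [e2] at hu
    constructor
    · linarith
    · linarith
  exact (closure_minimal hTS hclosed) hdense

private theorem euclidF
    (hfk : ∀ u v : X, ‖u‖ = 1 → ‖v‖ = 1 → ∀ α β : ℝ, ‖α • u + β • v‖ = ‖β • u + α • v‖)
    (d1 d2 : X) (h1 : ‖d1‖ = 1) (h2 : ‖d2‖ = 1)
    (heven : ∀ a b : ℝ, ‖a • d1 + b • d2‖ = ‖a • d1 + (-b) • d2‖)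
    (hindep : ∀ a b : ℝ, a • d1 + b • d2 = 0 → a = 0 ∧ b = 0) :
    ∀ a b : ℝ, ‖a • d1 + b • d2‖ = Real.sqrt (a^2 + b^2) := by
  intro a b
  by_cases hab : a = 0 ∧ b = 0
  · rcases hab with ⟨rfl, rfl⟩
    simp
  · have hab2 : 0 < a^2 + b^2 := by
      rcases not_and_or.mp hab with ha | hb
      · have : 0 < a^2 := by positivity
        nlinarith [sq_nonneg b]
      · have : 0 < b^2 := by positivity
        nlinarith [sq_nonneg a]
    set r := Real.sqrt (a^2+b^2) with hr
    have hr0 : 0 < r := Real.sqrt_pos.mpr hab2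
    set z : ℂ := ⟨a, b⟩ with hz
    have hzne : z ≠ 0 := by
      intro h0
      rw [Complex.ext_iff] at h0
      simp [hz] at h0
      exact hab ⟨h0.1, h0.2⟩
    have habs : ‖z‖ = r := by
      rw [Complex.norm_def, Complex.normSq_mk, hr]
      congr 1
      ring
    set α := Complex.arg z with hα
    have hcos : Real.cos α = a / r := by
      rw [hα, Complex.cos_arg hzne, habs]
    have hsin : Real.sin α = b / r := by
      rw [hα, Complex.sin_arg, habs]
    have hcirc := circleF hfk d1 d2 h1 h2 heven hindep α
    rw [hcos, hsin] at hcirc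
    have e : a • d1 + b • d2 = r • ((a/r) • d1 + (b/r) • d2) := by
      rw [smul_add, smul_smul, smul_smul]
      congr 2 <;> field_simp
    rw [e, norm_smul, Real.norm_eq_abs, abs_of_pos hr0, hcirc, mul_one]

private theorem para_unit
    (hfk : ∀ u v : X, ‖u‖ = 1 → ‖v‖ = 1 → ∀ α β : ℝ, ‖α • u + β • v‖ = ‖β • u + α • v‖)
    (u v : X) (hu : ‖u‖ = 1) (hv : ‖v‖ = 1) (hvu : v ≠ u) (hvnu : v ≠ -u)
    (s r : ℝ) : ‖s • u + r • v‖^2 + ‖s • u - r • v‖^2 = 2*s^2 + 2*r^2 := by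
  have hu0 : u ≠ 0 := by intro h0; rw [h0, norm_zero] at hu; norm_num at hu
  have hA : 0 < ‖u + v‖ := by
    rw [norm_pos_iff]
    intro h0
    exact hvnu (by linear_combination (norm := module) h0)
  have hB : 0 < ‖u - v‖ := by
    rw [norm_pos_iff]
    intro h0
    exact hvu (by linear_combination (norm := module) -h0)
  set A := ‖u + v‖ with hAdef
  set B := ‖u - v‖ with hBdef
  set d1 : X := A⁻¹ • (u + v) with hd1
  set d2 : X := B⁻¹ • (u - v) with hd2
  have h1 : ‖d1‖ = 1 := by
    rw [hd1, norm_smul, Real.norm_eq_abs, abs_of_pos (inv_pos.mpr hA), ← hAdef,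
      inv_mul_cancel₀ hA.ne']
  have h2 : ‖d2‖ = 1 := by
    rw [hd2, norm_smul, Real.norm_eq_abs, abs_of_pos (inv_pos.mpr hB), ← hBdef,
      inv_mul_cancel₀ hB.ne']
  have hindep_uv : ∀ a b : ℝ, a • u + b • v = 0 → a = 0 ∧ b = 0 := by
    intro a b h0
    by_cases hb : b = 0
    · subst hb
      rw [zero_smul, add_zero, smul_eq_zero] at h0
      exact ⟨h0.resolve_right hu0, rfl⟩
    · exfalso
      have hveq : v = (-(a/b)) • u := by
        have hh1 : b • v = -(a • u) := by linear_combination (norm := module) h0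
        have hh2 := congrArg (fun w => b⁻¹ • w) hh1
        simp only [smul_smul, inv_mul_cancel₀ hb, one_smul] at hh2
        rw [hh2]
        match_scalars
        field_simp
      have habs : |(-(a/b))| = 1 := by
        have := congrArg norm hveq
        rw [hv, norm_smul, hu, Real.norm_eq_abs, mul_one] at this
        exact this.symm
      rcases abs_eq (by norm_num : (0:ℝ) ≤ 1) |>.mp habs with he | he
      · rw [he, one_smul] at hveq
        -- v = u? no : v = 1 • u
        exact hvu hveq
      · rw [he] at hveq
        apply hvnu
        rw [hveq]
        module
  have hcoord : ∀ a b : ℝ, a • d1 + b • d2 = (a/A + b/B) • u + (a/A - b/B) • v := by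
    intro a b
    rw [hd1, hd2, smul_smul, smul_smul]
    have e1 : a * A⁻¹ = a/A := by ring
    have e2 : b * B⁻¹ = b/B := by ring
    rw [e1, e2]
    module
  have heven : ∀ a b : ℝ, ‖a • d1 + b • d2‖ = ‖a • d1 + (-b) • d2‖ := by
    intro a b
    rw [hcoord a b, hcoord a (-b)]
    have e1 : -b/B = -(b/B) := by ring
    rw [e1]
    have := hfk u v hu hv (a/A + b/B) (a/A - b/B)
    rw [this]
    congr 2 <;> ring
  have hindep_d : ∀ a b : ℝ, a • d1 + b • d2 = 0 → a = 0 ∧ b = 0 := by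
    intro a b h0
    rw [hcoord] at h0
    obtain ⟨e1, e2⟩ := hindep_uv _ _ h0
    constructor
    · have : a/A = 0 := by linarith
      field_simp at this
      simpa using this
    · have : b/B = 0 := by linarith
      field_simp at this
      simpa using this
  have hN := euclidF hfk d1 d2 h1 h2 heven hindep_d
  have eu : (A/2) • d1 + (B/2) • d2 = u := by
    rw [hd1, hd2, smul_smul, smul_smul]
    have e1 : A/2 * A⁻¹ = (2:ℝ)⁻¹ := by field_simp
    have e2 : B/2 * B⁻¹ = (2:ℝ)⁻¹ := by field_simp
    rw [e1, e2]
    module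
  have ev : (A/2) • d1 + (-(B/2)) • d2 = v := by
    rw [hd1, hd2, smul_smul, smul_smul]
    have e1 : A/2 * A⁻¹ = (2:ℝ)⁻¹ := by field_simp
    have e2 : -(B/2) * B⁻¹ = -(2:ℝ)⁻¹ := by field_simp
    rw [e1, e2]
    module
  have hA4 : A^2 + B^2 = 4 := by
    have h1u : ‖(A/2) • d1 + (B/2) • d2‖ = 1 := by rw [eu]; exact hu
    rw [hN] at h1u
    have hnn : (0:ℝ) ≤ (A/2)^2 + (B/2)^2 := by positivity
    have := congrArg (fun t => t^2) h1u
    simp only [Real.sq_sqrt hnn, one_pow] at this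
    nlinarith [this]
  have ex : s • u + r • v = ((s+r)*(A/2)) • d1 + ((s-r)*(B/2)) • d2 := by
    rw [← eu, ← ev]
    module
  have ey : s • u - r • v = ((s-r)*(A/2)) • d1 + ((s+r)*(B/2)) • d2 := by
    rw [← eu, ← ev]
    module
  rw [ex, ey, hN, hN, Real.sq_sqrt (by positivity), Real.sq_sqrt (by positivity)]
  nlinarith [hA4]
end

theorem thm5 {X : Type*} [NormedAddCommGroup X] [NormedSpace ℝ X]
    (p q : ℝ) (hp : p ∈ Set.Ico (0:ℝ) 1) (hq : 0 < q)
    (h : ∀ x y : X, x ≠ 0 → y ≠ 0 →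
      ‖(‖x‖ ^ (p - 1)) • x - (‖y‖ ^ (p - 1)) • y‖ ≤
        2 ^ (1 / q) * ‖x - y‖ / (‖x‖ ^ ((1 - p) * q) + ‖y‖ ^ ((1 - p) * q)) ^ (1 / q)) :
    ∀ x y : X, ‖x + y‖ ^ 2 + ‖x - y‖ ^ 2 = 2 * ‖x‖ ^ 2 + 2 * ‖y‖ ^ 2 := by
  obtain ⟨hp0, hp1⟩ := hp
  have hstar := star' p q hp0 hp1 hq h
  have hfk := ficken hstar
  intro x y
  by_cases hx : x = 0
  · subst hx
    simp
    ring
  by_cases hy : y = 0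
  · subst hy
    simp
    ring
  by_cases hcol : ∃ c : ℝ, y = c • x
  · obtain ⟨c, rfl⟩ := hcol
    have e1 : x + c • x = (1+c) • x := by module
    have e2 : x - c • x = (1-c) • x := by module
    rw [e1, e2, norm_smul, norm_smul, norm_smul, Real.norm_eq_abs, Real.norm_eq_abs,
      Real.norm_eq_abs, mul_pow, mul_pow, mul_pow, sq_abs, sq_abs, sq_abs]
    ring
  · have hnx : ‖x‖ ≠ 0 := fun h0 => hx (norm_eq_zero.mp h0)
    have hny : ‖y‖ ≠ 0 := fun h0 => hy (norm_eq_zero.mp h0)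
    set u : X := ‖x‖⁻¹ • x with hudef
    set v : X := ‖y‖⁻¹ • y with hvdef
    have hu : ‖u‖ = 1 := by
      rw [hudef, norm_smul, Real.norm_eq_abs, abs_of_pos (inv_pos.mpr (norm_pos_iff.mpr hx)),
        inv_mul_cancel₀ hnx]
    have hv : ‖v‖ = 1 := by
      rw [hvdef, norm_smul, Real.norm_eq_abs, abs_of_pos (inv_pos.mpr (norm_pos_iff.mpr hy)),
        inv_mul_cancel₀ hny]
    have hxu : ‖x‖ • u = x := by rw [hudef, smul_smul, mul_inv_cancel₀ hnx, one_smul]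
    have hyv : ‖y‖ • v = y := by rw [hvdef, smul_smul, mul_inv_cancel₀ hny, one_smul]
    have hvu : v ≠ u := by
      intro h0
      apply hcol
      refine ⟨‖y‖ * ‖x‖⁻¹, ?_⟩
      calc y = ‖y‖ • v := hyv.symm
        _ = ‖y‖ • u := by rw [h0]
        _ = (‖y‖ * ‖x‖⁻¹) • x := by rw [hudef, smul_smul]
    have hvnu : v ≠ -u := by
      intro h0
      apply hcol
      refine ⟨-(‖y‖ * ‖x‖⁻¹), ?_⟩
      calc y = ‖y‖ • v := hyv.symm
        _ = ‖y‖ • (-u) := by rw [h0]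
        _ = (-(‖y‖ * ‖x‖⁻¹)) • x := by rw [hudef]; module
    have := para_unit hfk u v hu hv hvu hvnu ‖x‖ ‖y‖
    rw [hxu, hyv] at this
    rw [this]
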